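/- Let $n > 0$, $T_R, \tau_1 > 0$, and let $q : [0,T] \to [0, n)$ be integrable with average $\bar{q} = \frac{1}{T}\int_0^T q(t)\,dt$. Then $\frac{1}{T}\int_0^T \frac{q(t)}{T_R + \tau_1/\sqrt{n - q(t)}}\,dt \leq \frac{\bar{q}}{T_R + \tau_1/\sqrt{n - \bar{q}}}$. -/
import Mathlib

lemma jensen_aux (b c n s σ : ℝ) (hb : 0 < b) (hc : 0 < c) (hn : 0 < n)
    (hs : 0 < s) (hσ : 0 < σ) :
    (n - s^2) * s / (b*s + c) ≤ (n - σ^2) * σ / (b*σ + c) +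
      (σ/(b*σ+c) - (n - σ^2)*c/(2*σ*(b*σ+c)^2)) * ((n - s^2) - (n - σ^2)) := by
  have hA : (0:ℝ) < b*s + c := by positivity
  have hB : (0:ℝ) < b*σ + c := by positivity
  have key : (n - σ^2) * σ / (b*σ + c) +
      (σ/(b*σ+c) - (n - σ^2)*c/(2*σ*(b*σ+c)^2)) * ((n - s^2) - (n - σ^2))
      - (n - s^2) * s / (b*s + c)
      = (c*(σ - s)^2*(c*(n + σ^2 + 2*s*σ) + b*((2*σ + s)*n + s*σ^2))) /
        (2*σ*(b*σ+c)^2*(b*s+c)) := by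
    field_simp
    ring
  have h2 : 0 ≤ (n - σ^2) * σ / (b*σ + c) +
      (σ/(b*σ+c) - (n - σ^2)*c/(2*σ*(b*σ+c)^2)) * ((n - s^2) - (n - σ^2))
      - (n - s^2) * s / (b*s + c) := by
    rw [key]; positivity
  linarith

theorem jensen_concave_pickup (n TR τ1 T : ℝ) (hn : 0 < n) (hTR : 0 < TR)
    (hτ : 0 < τ1) (hT : 0 < T)
    (q : ℝ → ℝ)
    (hq : ∀ t ∈ Set.Icc (0:ℝ) T, 0 ≤ q t ∧ q t < n)
    (hint : IntervalIntegrable q MeasureTheory.volume 0 T)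
    (hint2 : IntervalIntegrable (fun t => q t / (TR + τ1 / Real.sqrt (n - q t)))
      MeasureTheory.volume 0 T)
    (qbar : ℝ) (hqbar : qbar = (1 / T) * ∫ t in (0:ℝ)..T, q t) :
    (1 / T) * ∫ t in (0:ℝ)..T, q t / (TR + τ1 / Real.sqrt (n - q t))
      ≤ qbar / (TR + τ1 / Real.sqrt (n - qbar)) := by
  set a := qbar with ha
  -- bounds on a
  have hIq : (0:ℝ) ≤ ∫ t in (0:ℝ)..T, q t := by
    apply intervalIntegral.integral_nonneg hT.le
    intro t ht; exact (hq t ht).1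
  have ha0 : 0 ≤ a := by
    rw [hqbar]; positivity
  have hposint : 0 < ∫ t in (0:ℝ)..T, (n - q t) := by
    apply intervalIntegral.intervalIntegral_pos_of_pos_on
    · exact (intervalIntegrable_const (c := n)).sub hint
    · intro t ht
      have := (hq t ⟨ht.1.le, ht.2.le⟩).2
      linarith
    · exact hT
  have hsub : (∫ t in (0:ℝ)..T, (n - q t)) = n * T - ∫ t in (0:ℝ)..T, q t := by
    rw [intervalIntegral.integral_sub (intervalIntegrable_const) hint,
      intervalIntegral.integral_const]
    simp [smul_eq_mul]
    ring
  have han : a < n := by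
    rw [hsub] at hposint
    have hI : (∫ t in (0:ℝ)..T, q t) < n * T := by linarith
    rw [hqbar]
    calc (1/T) * ∫ t in (0:ℝ)..T, q t < (1/T) * (n * T) :=
          mul_lt_mul_of_pos_left hI (by positivity)
      _ = n := by field_simp
  -- sqrt setup for a
  set σ := Real.sqrt (n - a) with hσdef
  have hσpos : 0 < σ := Real.sqrt_pos.mpr (by linarith)
  have hσsq : σ^2 = n - a := Real.sq_sqrt (by linarith)
  have hBpos : (0:ℝ) < TR*σ + τ1 := by positivity
  set m := σ/(TR*σ+τ1) - (n - σ^2)*τ1/(2*σ*(TR*σ+τ1)^2) with hm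
  have hconva : a / (TR + τ1 / σ) = (n - σ^2) * σ / (TR*σ + τ1) := by
    rw [show TR + τ1 / σ = (TR*σ + τ1)/σ by field_simp]
    rw [div_div_eq_mul_div]
    rw [hσsq]; ring
  -- pointwise tangent bound
  have hpt : ∀ t ∈ Set.Icc (0:ℝ) T,
      q t / (TR + τ1 / Real.sqrt (n - q t)) ≤ a / (TR + τ1 / σ) + m * (q t - a) := by
    intro t ht
    obtain ⟨hq0, hqn⟩ := hq t ht
    set s := Real.sqrt (n - q t) with hsdef
    have hspos : 0 < s := Real.sqrt_pos.mpr (by linarith)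
    have hssq : s^2 = n - q t := Real.sq_sqrt (by linarith)
    have hApos : (0:ℝ) < TR*s + τ1 := by positivity
    have hconvx : q t / (TR + τ1 / s) = (n - s^2) * s / (TR*s + τ1) := by
      rw [show TR + τ1 / s = (TR*s + τ1)/s by field_simp]
      rw [div_div_eq_mul_div]
      rw [hssq]; ring
    rw [hconvx, hconva]
    have hx : q t - a = (n - s^2) - (n - σ^2) := by rw [hssq, hσsq]; ring
    rw [hx, hm]
    exact jensen_aux TR τ1 n s σ hTR hτ hn hspos hσpos
  -- integrate
  have hintR : IntervalIntegrable (fun t => a / (TR + τ1 / σ) + m * (q t - a))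
      MeasureTheory.volume 0 T :=
    (intervalIntegrable_const).add (((hint.sub intervalIntegrable_const).const_mul m))
  have hmono : (∫ t in (0:ℝ)..T, q t / (TR + τ1 / Real.sqrt (n - q t)))
      ≤ ∫ t in (0:ℝ)..T, (a / (TR + τ1 / σ) + m * (q t - a)) :=
    intervalIntegral.integral_mono_on hT.le hint2 hintR hpt
  have hIqa : (∫ t in (0:ℝ)..T, q t) = a * T := by
    rw [hqbar]; field_simp
  have hRval : (∫ t in (0:ℝ)..T, (a / (TR + τ1 / σ) + m * (q t - a)))
      = (a / (TR + τ1 / σ)) * T := by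
    rw [intervalIntegral.integral_add intervalIntegrable_const
      ((hint.sub intervalIntegrable_const).const_mul m),
      intervalIntegral.integral_const,
      intervalIntegral.integral_const_mul,
      intervalIntegral.integral_sub hint intervalIntegrable_const,
      intervalIntegral.integral_const, hIqa]
    simp [smul_eq_mul]
    ring
  rw [hRval] at hmono
  have hfin : (1/T) * (∫ t in (0:ℝ)..T, q t / (TR + τ1 / Real.sqrt (n - q t)))
      ≤ (1/T) * ((a / (TR + τ1 / σ)) * T) :=
    mul_le_mul_of_nonneg_left hmono (by positivity)
  calc (1/T) * (∫ t in (0:ℝ)..T, q t / (TR + τ1 / Real.sqrt (n - q t)))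
      ≤ (1/T) * ((a / (TR + τ1 / σ)) * T) := hfin
    _ = a / (TR + τ1 / σ) := by field_simp
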